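/- arXiv:1410.1664 — 2 statements merged into one kernel-verified Lean document; each statement's English description precedes it below -/
import Mathlib

section
/- Convergence of the operators (Lemma 5.1): Let ξ_m ∈ ℝ, p_m ∈ ℝ^n \ {0}, and symmetric n×n matrices M_m be such that ξ_m → ξ, p_m → p with p ≠ 0, and M_m → M as m → ∞. Then H_m⁺(ξ_m, p_m, M_m) → −F(ξ, p, M) and H_m⁻(ξ_m, p_m, M_m) → −F(ξ, p, M) as m → ∞. -/
open scoped RealInnerProductSpace
open Filter Topology

noncomputable section

namespace TugOfWar

/-- The quadratic form `vᵀ Σ M Σ v`, where `Σ = diag (σ 1, …, σ n)`. -/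
def sigQF {n : ℕ} (σ : Fin n → ℝ) (M : Matrix (Fin n) (Fin n) ℝ)
    (v : EuclideanSpace ℝ (Fin n)) : ℝ :=
  ∑ i, ∑ j, (σ i * v i) * M i j * (σ j * v j)

/-- `trace (Σ² M)`. -/
def trSig2 {n : ℕ} (σ : Fin n → ℝ) (M : Matrix (Fin n) (Fin n) ℝ) : ℝ :=
  ∑ i, σ i ^ 2 * M i i

/-- The integrand `Φ(θ⁺,θ⁻,d⁺,d⁻,p,M)`. -/
def Phi {n : ℕ} (σ : Fin n → ℝ) (μ : EuclideanSpace ℝ (Fin n))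
    (θp θm : EuclideanSpace ℝ (Fin n)) (dp dm : ℝ)
    (p : EuclideanSpace ℝ (Fin n)) (M : Matrix (Fin n) (Fin n) ℝ) : ℝ :=
  -(1 / 2) * sigQF σ M (θp - θm) - (1 / 2) * trSig2 σ M
    - (dp + dm) * ⟪θp + θm, p⟫ - ⟪μ, p⟫

/-- The control set `ℋ_m = S^{n-1} × [0, m]`. -/
def Hset (n : ℕ) (m : ℕ) : Set (EuclideanSpace ℝ (Fin n) × ℝ) :=
  {a | ‖a.1‖ = 1 ∧ a.2 ∈ Set.Icc (0 : ℝ) (m : ℝ)}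

/-- `H_m⁺(ξ,p,M) = sup_{(θ⁻,d⁻)∈ℋ_m} inf_{(θ⁺,d⁺)∈ℋ_m} Φ + rξ`. -/
def Hplus {n : ℕ} (σ : Fin n → ℝ) (μ : EuclideanSpace ℝ (Fin n)) (r : ℝ) (m : ℕ)
    (ξ : ℝ) (p : EuclideanSpace ℝ (Fin n)) (M : Matrix (Fin n) (Fin n) ℝ) : ℝ :=
  sSup ((fun a => sInf ((fun b => Phi σ μ b.1 a.1 b.2 a.2 p M) '' Hset n m)) '' Hset n m)
    + r * ξ

/-- `H_m⁻(ξ,p,M) = inf_{(θ⁺,d⁺)∈ℋ_m} sup_{(θ⁻,d⁻)∈ℋ_m} Φ + rξ`. -/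
def Hminus {n : ℕ} (σ : Fin n → ℝ) (μ : EuclideanSpace ℝ (Fin n)) (r : ℝ) (m : ℕ)
    (ξ : ℝ) (p : EuclideanSpace ℝ (Fin n)) (M : Matrix (Fin n) (Fin n) ℝ) : ℝ :=
  sInf ((fun b => sSup ((fun a => Phi σ μ b.1 a.1 b.2 a.2 p M) '' Hset n m)) '' Hset n m)
    + r * ξ

/-- The limit operator `F(ξ,p,M)`, for `p ≠ 0`. -/
def Fop {n : ℕ} (σ : Fin n → ℝ) (μ : EuclideanSpace ℝ (Fin n)) (r : ℝ)
    (ξ : ℝ) (p : EuclideanSpace ℝ (Fin n)) (M : Matrix (Fin n) (Fin n) ℝ) : ℝ :=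
  (2 / ‖p‖ ^ 2) * sigQF σ M p + (1 / 2) * trSig2 σ M + ⟪μ, p⟫ - r * ξ

/-- `F^*(ξ,0,M) = limsup_{p → 0, p ≠ 0} F(ξ,p,M)`. -/
def Fupper {n : ℕ} (σ : Fin n → ℝ) (μ : EuclideanSpace ℝ (Fin n)) (r : ℝ)
    (ξ : ℝ) (M : Matrix (Fin n) (Fin n) ℝ) : ℝ :=
  Filter.limsup (fun p => Fop σ μ r ξ p M) (𝓝[≠] (0 : EuclideanSpace ℝ (Fin n)))

/-- `F_*(ξ,0,M) = liminf_{p → 0, p ≠ 0} F(ξ,p,M)`. -/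
def Flower {n : ℕ} (σ : Fin n → ℝ) (μ : EuclideanSpace ℝ (Fin n)) (r : ℝ)
    (ξ : ℝ) (M : Matrix (Fin n) (Fin n) ℝ) : ℝ :=
  Filter.liminf (fun p => Fop σ μ r ξ p M) (𝓝[≠] (0 : EuclideanSpace ℝ (Fin n)))

/-- The parabolic domain `ℝ^n × [0,T]`. -/
def Dom (n : ℕ) (T : ℝ) : Set (EuclideanSpace ℝ (Fin n) × ℝ) :=
  Set.univ ×ˢ Set.Icc 0 T

/-- Test functions: `φ` is `C¹` in time with derivative `φt`, and `C²` in space with spatial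
gradient `Dφ` and (symmetric) spatial Hessian `D2φ`, all jointly continuous. -/
def IsC12 {n : ℕ} (φ φt : EuclideanSpace ℝ (Fin n) → ℝ → ℝ)
    (Dφ : EuclideanSpace ℝ (Fin n) → ℝ → EuclideanSpace ℝ (Fin n))
    (D2φ : EuclideanSpace ℝ (Fin n) → ℝ → Matrix (Fin n) (Fin n) ℝ) : Prop :=
  Continuous (fun q : EuclideanSpace ℝ (Fin n) × ℝ => φt q.1 q.2) ∧
  Continuous (fun q : EuclideanSpace ℝ (Fin n) × ℝ => Dφ q.1 q.2) ∧
  Continuous (fun q : EuclideanSpace ℝ (Fin n) × ℝ => D2φ q.1 q.2) ∧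
  (∀ x t, HasDerivAt (fun s => φ x s) (φt x t) t) ∧
  (∀ x t, HasGradientAt (fun y => φ y t) (Dφ x t) x) ∧
  (∀ x t, HasFDerivAt (fun y => Dφ y t) (Matrix.toEuclideanCLM (𝕜 := ℝ) (D2φ x t)) x) ∧
  (∀ x t, (D2φ x t).IsSymm)

/-- At most linear growth on `ℝ^n × [0,T]`. -/
def LinGrowth {n : ℕ} (T : ℝ) (u : EuclideanSpace ℝ (Fin n) → ℝ → ℝ) : Prop :=
  ∃ c : ℝ, ∀ x t, t ∈ Set.Icc 0 T → |u x t| ≤ c * (1 + ‖x‖)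

/-- Continuity on `ℝ^n × [0,T]`. -/
def ContOn {n : ℕ} (T : ℝ) (u : EuclideanSpace ℝ (Fin n) → ℝ → ℝ) : Prop :=
  ContinuousOn (fun q : EuclideanSpace ℝ (Fin n) × ℝ => u q.1 q.2) (Dom n T)

/-- The payoff `g` is positive, and `sup g + Lip(g) ≤ L`. -/
def PayoffOK {n : ℕ} (g : EuclideanSpace ℝ (Fin n) → ℝ) (L : ℝ) : Prop :=
  (∀ x, 0 < g x) ∧
  ∃ B K : ℝ, B + K ≤ L ∧ (∀ x, g x ≤ B) ∧ ∀ x y, |g x - g y| ≤ K * ‖x - y‖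

/-- Viscosity supersolution of `∂ₜ u − H(u,Du,D²u) = 0` with terminal data `g`. -/
def SuperSolH {n : ℕ} (T : ℝ)
    (H : ℝ → EuclideanSpace ℝ (Fin n) → Matrix (Fin n) (Fin n) ℝ → ℝ)
    (g : EuclideanSpace ℝ (Fin n) → ℝ) (u : EuclideanSpace ℝ (Fin n) → ℝ → ℝ) : Prop :=
  LowerSemicontinuousOn (fun q : EuclideanSpace ℝ (Fin n) × ℝ => u q.1 q.2) (Dom n T) ∧
  LinGrowth T u ∧
  (∀ x, g x ≤ u x T) ∧
  ∀ x₀ t₀, t₀ ∈ Set.Ioo 0 T →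
    ∀ φ φt Dφ D2φ, IsC12 φ φt Dφ D2φ →
      u x₀ t₀ = φ x₀ t₀ →
      (∀ x t, t ∈ Set.Icc 0 T → (x, t) ≠ (x₀, t₀) → φ x t < u x t) →
      φt x₀ t₀ ≤ H (u x₀ t₀) (Dφ x₀ t₀) (D2φ x₀ t₀)

/-- Viscosity subsolution of `∂ₜ u − H(u,Du,D²u) = 0` with terminal data `g`. -/
def SubSolH {n : ℕ} (T : ℝ)
    (H : ℝ → EuclideanSpace ℝ (Fin n) → Matrix (Fin n) (Fin n) ℝ → ℝ)
    (g : EuclideanSpace ℝ (Fin n) → ℝ) (u : EuclideanSpace ℝ (Fin n) → ℝ → ℝ) : Prop :=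
  UpperSemicontinuousOn (fun q : EuclideanSpace ℝ (Fin n) × ℝ => u q.1 q.2) (Dom n T) ∧
  LinGrowth T u ∧
  (∀ x, u x T ≤ g x) ∧
  ∀ x₀ t₀, t₀ ∈ Set.Ioo 0 T →
    ∀ φ φt Dφ D2φ, IsC12 φ φt Dφ D2φ →
      u x₀ t₀ = φ x₀ t₀ →
      (∀ x t, t ∈ Set.Icc 0 T → (x, t) ≠ (x₀, t₀) → u x t < φ x t) →
      H (u x₀ t₀) (Dφ x₀ t₀) (D2φ x₀ t₀) ≤ φt x₀ t₀

/-- Continuous viscosity solution of `∂ₜ u − H(u,Du,D²u) = 0` with terminal data `g`. -/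
def SolH {n : ℕ} (T : ℝ)
    (H : ℝ → EuclideanSpace ℝ (Fin n) → Matrix (Fin n) (Fin n) ℝ → ℝ)
    (g : EuclideanSpace ℝ (Fin n) → ℝ) (u : EuclideanSpace ℝ (Fin n) → ℝ → ℝ) : Prop :=
  ContOn T u ∧ SuperSolH T H g u ∧ SubSolH T H g u

/-- Viscosity supersolution of `∂ₜ u + F(u,Du,D²u) = 0` with terminal data `g`. -/
def SuperSolF {n : ℕ} (T : ℝ) (σ : Fin n → ℝ) (μ : EuclideanSpace ℝ (Fin n)) (r : ℝ)
    (g : EuclideanSpace ℝ (Fin n) → ℝ) (u : EuclideanSpace ℝ (Fin n) → ℝ → ℝ) : Prop :=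
  LowerSemicontinuousOn (fun q : EuclideanSpace ℝ (Fin n) × ℝ => u q.1 q.2) (Dom n T) ∧
  LinGrowth T u ∧
  (∀ x, g x ≤ u x T) ∧
  ∀ x₀ t₀, t₀ ∈ Set.Ioo 0 T →
    ∀ φ φt Dφ D2φ, IsC12 φ φt Dφ D2φ →
      u x₀ t₀ = φ x₀ t₀ →
      (∀ x t, t ∈ Set.Icc 0 T → (x, t) ≠ (x₀, t₀) → φ x t < u x t) →
      (Dφ x₀ t₀ ≠ 0 →
        φt x₀ t₀ + Fop σ μ r (u x₀ t₀) (Dφ x₀ t₀) (D2φ x₀ t₀) ≤ 0) ∧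
      (Dφ x₀ t₀ = 0 →
        φt x₀ t₀ + Flower σ μ r (u x₀ t₀) (D2φ x₀ t₀) ≤ 0)

/-- Viscosity subsolution of `∂ₜ u + F(u,Du,D²u) = 0` with terminal data `g`. -/
def SubSolF {n : ℕ} (T : ℝ) (σ : Fin n → ℝ) (μ : EuclideanSpace ℝ (Fin n)) (r : ℝ)
    (g : EuclideanSpace ℝ (Fin n) → ℝ) (u : EuclideanSpace ℝ (Fin n) → ℝ → ℝ) : Prop :=
  UpperSemicontinuousOn (fun q : EuclideanSpace ℝ (Fin n) × ℝ => u q.1 q.2) (Dom n T) ∧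
  LinGrowth T u ∧
  (∀ x, u x T ≤ g x) ∧
  ∀ x₀ t₀, t₀ ∈ Set.Ioo 0 T →
    ∀ φ φt Dφ D2φ, IsC12 φ φt Dφ D2φ →
      u x₀ t₀ = φ x₀ t₀ →
      (∀ x t, t ∈ Set.Icc 0 T → (x, t) ≠ (x₀, t₀) → u x t < φ x t) →
      (Dφ x₀ t₀ ≠ 0 →
        0 ≤ φt x₀ t₀ + Fop σ μ r (u x₀ t₀) (Dφ x₀ t₀) (D2φ x₀ t₀)) ∧
      (Dφ x₀ t₀ = 0 →
        0 ≤ φt x₀ t₀ + Fupper σ μ r (u x₀ t₀) (D2φ x₀ t₀))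

/-- Continuous viscosity solution of `∂ₜ u + F(u,Du,D²u) = 0` with terminal data `g`. -/
def SolF {n : ℕ} (T : ℝ) (σ : Fin n → ℝ) (μ : EuclideanSpace ℝ (Fin n)) (r : ℝ)
    (g : EuclideanSpace ℝ (Fin n) → ℝ) (u : EuclideanSpace ℝ (Fin n) → ℝ → ℝ) : Prop :=
  ContOn T u ∧ SuperSolF T σ μ r g u ∧ SubSolF T σ μ r g u

/-- The barrier `w̄(x,t) = g(y) + (A/ε²)(T−t) + 2L(|x−y|² + ε)^{1/2}`. -/
def barrierUp {n : ℕ} (g : EuclideanSpace ℝ (Fin n) → ℝ) (L A ε T : ℝ)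
    (y : EuclideanSpace ℝ (Fin n)) : EuclideanSpace ℝ (Fin n) → ℝ → ℝ :=
  fun x t => g y + (A / ε ^ 2) * (T - t) + 2 * L * Real.sqrt (‖x - y‖ ^ 2 + ε)

/-- The barrier `w̲(x,t) = g(y) − (A/ε²)(T−t) − 2L(|x−y|² + ε)^{1/2}`. -/
def barrierDown {n : ℕ} (g : EuclideanSpace ℝ (Fin n) → ℝ) (L A ε T : ℝ)
    (y : EuclideanSpace ℝ (Fin n)) : EuclideanSpace ℝ (Fin n) → ℝ → ℝ :=
  fun x t => g y - (A / ε ^ 2) * (T - t) - 2 * L * Real.sqrt (‖x - y‖ ^ 2 + ε)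

/-- `Φ̃(θ⁺,θ⁻,d⁺,d⁻,p,M)`: the part of `Φ` sensitive to the inf–sup. -/
def PhiT {n : ℕ} (σ : Fin n → ℝ) (θp θm : EuclideanSpace ℝ (Fin n)) (dp dm : ℝ)
    (p : EuclideanSpace ℝ (Fin n)) (M : Matrix (Fin n) (Fin n) ℝ) : ℝ :=
  -(1 / 2) * sigQF σ M (θp - θm) - (dp + dm) * ⟪θp + θm, p⟫

/-- `sup_{(θ⁻,d⁻)∈ℋ_m} Φ̃(θ⁺,θ⁻,d⁺,d⁻,p,M)` as a function of `a = (θ⁺,d⁺)`. -/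
def supPhiT {n : ℕ} (σ : Fin n → ℝ) (m : ℕ) (a : EuclideanSpace ℝ (Fin n) × ℝ)
    (p : EuclideanSpace ℝ (Fin n)) (M : Matrix (Fin n) (Fin n) ℝ) : ℝ :=
  sSup ((fun b => PhiT σ a.1 b.1 a.2 b.2 p M) '' Hset n m)

/-- `Φ̃_m(p,M) = inf_{(θ⁺,d⁺)∈ℋ_m} sup_{(θ⁻,d⁻)∈ℋ_m} Φ̃`. -/
def PhiTm {n : ℕ} (σ : Fin n → ℝ) (m : ℕ)
    (p : EuclideanSpace ℝ (Fin n)) (M : Matrix (Fin n) (Fin n) ℝ) : ℝ :=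
  sInf ((fun a => supPhiT σ m a p M) '' Hset n m)

/-- The set of values appearing in the parabolic sup-convolution. -/
def supConvSet {n : ℕ} (T ε : ℝ) (u : EuclideanSpace ℝ (Fin n) → ℝ → ℝ)
    (x₀ : EuclideanSpace ℝ (Fin n)) (t₀ : ℝ) : Set ℝ :=
  {y | ∃ x t, t ∈ Set.Icc 0 T ∧ y = u x t - ((t₀ - t) ^ 2 + ‖x₀ - x‖ ^ 2) / (2 * ε)}



/-! ### Auxiliary lemmas for Lemma 5.1 -/

lemma abs_apply_le {n : ℕ} (u : EuclideanSpace ℝ (Fin n)) (i : Fin n) : |u i| ≤ ‖u‖ := by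
  rw [EuclideanSpace.norm_eq]
  calc |u i| = Real.sqrt (‖u i‖ ^ 2) := by
        rw [Real.sqrt_sq_eq_abs, Real.norm_eq_abs, abs_abs]
    _ ≤ _ := Real.sqrt_le_sqrt (Finset.single_le_sum (f := fun j => ‖u j‖ ^ 2)
        (fun j _ => sq_nonneg _) (Finset.mem_univ i))

lemma sigQF_smul {n : ℕ} (σ : Fin n → ℝ) (M : Matrix (Fin n) (Fin n) ℝ)
    (c : ℝ) (v : EuclideanSpace ℝ (Fin n)) :
    sigQF σ M (c • v) = c ^ 2 * sigQF σ M v := by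
  unfold sigQF
  rw [Finset.mul_sum]
  refine Finset.sum_congr rfl fun i _ => ?_
  rw [Finset.mul_sum]
  refine Finset.sum_congr rfl fun j _ => ?_
  simp only [PiLp.smul_apply, smul_eq_mul]
  ring

lemma sigQF_lip {n : ℕ} (σ : Fin n → ℝ) (M : Matrix (Fin n) (Fin n) ℝ)
    (u v : EuclideanSpace ℝ (Fin n)) :
    |sigQF σ M u - sigQF σ M v| ≤
      (∑ i, ∑ j, |σ i| * |σ j| * |M i j|) * ((‖u‖ + ‖v‖) * ‖u - v‖) := by
  have huv : ∀ i j : Fin n, |u i * u j - v i * v j| ≤ (‖u‖ + ‖v‖) * ‖u - v‖ := by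
    intro i j
    have h1 : |u i| ≤ ‖u‖ := abs_apply_le u i
    have h2 : |v j| ≤ ‖v‖ := abs_apply_le v j
    have h3 : |u j - v j| ≤ ‖u - v‖ := by
      have := abs_apply_le (u - v) j; simpa using this
    have h4 : |u i - v i| ≤ ‖u - v‖ := by
      have := abs_apply_le (u - v) i; simpa using this
    have hre : u i * u j - v i * v j = u i * (u j - v j) + (u i - v i) * v j := by ring
    rw [hre]
    calc |u i * (u j - v j) + (u i - v i) * v j|
        ≤ |u i * (u j - v j)| + |(u i - v i) * v j| := abs_add_le _ _
      _ = |u i| * |u j - v j| + |u i - v i| * |v j| := by rw [abs_mul, abs_mul]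
      _ ≤ ‖u‖ * ‖u - v‖ + ‖u - v‖ * ‖v‖ := by
          have := abs_nonneg (u i); have := abs_nonneg (v j)
          have hn1 := norm_nonneg u; have hn2 := norm_nonneg (u - v)
          nlinarith
      _ = (‖u‖ + ‖v‖) * ‖u - v‖ := by ring
  have hQ : sigQF σ M u - sigQF σ M v
      = ∑ i, ∑ j, (σ i * σ j * M i j) * (u i * u j - v i * v j) := by
    unfold sigQF
    rw [← Finset.sum_sub_distrib]
    refine Finset.sum_congr rfl fun i _ => ?_
    rw [← Finset.sum_sub_distrib]
    refine Finset.sum_congr rfl fun j _ => ?_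
    ring
  rw [hQ, Finset.sum_mul]
  calc |∑ i, ∑ j, (σ i * σ j * M i j) * (u i * u j - v i * v j)|
      ≤ ∑ i, |∑ j, (σ i * σ j * M i j) * (u i * u j - v i * v j)| :=
        Finset.abs_sum_le_sum_abs _ _
    _ ≤ ∑ i, (∑ j, |σ i| * |σ j| * |M i j|) * ((‖u‖ + ‖v‖) * ‖u - v‖) := by
        refine Finset.sum_le_sum fun i _ => ?_
        rw [Finset.sum_mul]
        calc |∑ j, (σ i * σ j * M i j) * (u i * u j - v i * v j)|
            ≤ ∑ j, |(σ i * σ j * M i j) * (u i * u j - v i * v j)| :=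
              Finset.abs_sum_le_sum_abs _ _
          _ ≤ ∑ j, |σ i| * |σ j| * |M i j| * ((‖u‖ + ‖v‖) * ‖u - v‖) := by
              refine Finset.sum_le_sum fun j _ => ?_
              rw [abs_mul, abs_mul, abs_mul]
              exact mul_le_mul_of_nonneg_left (huv i j) (by positivity)

lemma sigQF_zero {n : ℕ} (σ : Fin n → ℝ) (M : Matrix (Fin n) (Fin n) ℝ) :
    sigQF σ M (0 : EuclideanSpace ℝ (Fin n)) = 0 := by
  unfold sigQF
  refine Finset.sum_eq_zero fun i _ => Finset.sum_eq_zero fun j _ => ?_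
  simp

lemma sigQF_abs_le {n : ℕ} (σ : Fin n → ℝ) (M : Matrix (Fin n) (Fin n) ℝ)
    (u : EuclideanSpace ℝ (Fin n)) :
    |sigQF σ M u| ≤ (∑ i, ∑ j, |σ i| * |σ j| * |M i j|) * (‖u‖ * ‖u‖) := by
  have h := sigQF_lip σ M u 0
  simpa [sigQF_zero] using h

lemma hip {n : ℕ} (p : EuclideanSpace ℝ (Fin n)) (hp : p ≠ 0) :
    ⟪‖p‖⁻¹ • p, p⟫ = ‖p‖ := by
  rw [real_inner_smul_left, real_inner_self_eq_norm_sq]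
  have : ‖p‖ ≠ 0 := norm_ne_zero_iff.mpr hp
  field_simp [pow_two]

lemma hkey {n : ℕ} (p θ : EuclideanSpace ℝ (Fin n)) (hp : p ≠ 0) (hθ : ‖θ‖ = 1) :
    ‖p‖ - ⟪θ, p⟫ = (‖p‖ / 2) * ‖θ - ‖p‖⁻¹ • p‖ ^ 2 := by
  have hpn : ‖p‖ ≠ 0 := norm_ne_zero_iff.mpr hp
  have h1 : ‖θ - ‖p‖⁻¹ • p‖ ^ 2 = ‖θ‖ ^ 2 - 2 * ⟪θ, ‖p‖⁻¹ • p⟫ + ‖‖p‖⁻¹ • p‖ ^ 2 :=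
    norm_sub_sq_real θ _
  have h2 : ⟪θ, ‖p‖⁻¹ • p⟫ = ‖p‖⁻¹ * ⟪θ, p⟫ := real_inner_smul_right θ p _
  have h3 : ‖‖p‖⁻¹ • p‖ = 1 := norm_smul_inv_norm hp
  rw [h1, h2, h3, hθ]
  field_simp
  ring

lemma key_quad (K c t : ℝ) (hK : 0 ≤ K) (hc : 0 < c) :
    -(2 * K ^ 2 / c) ≤ -(2 * K) * t + (c / 2) * t ^ 2 := by
  rw [neg_le, le_div_iff₀ hc]
  nlinarith [sq_nonneg (c * t - 2 * K)]

lemma hdiff {n : ℕ} (θ q : EuclideanSpace ℝ (Fin n)) : (θ + q) - (2:ℝ) • q = θ - q := by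
  rw [two_smul]; abel

lemma hdiff2 {n : ℕ} (θ q : EuclideanSpace ℝ (Fin n)) : (q - θ) - (2:ℝ) • q = -(θ + q) := by
  rw [two_smul]; abel

lemma bound_a {n : ℕ} (σ : Fin n → ℝ) (M : Matrix (Fin n) (Fin n) ℝ)
    (p : EuclideanSpace ℝ (Fin n)) (hp : p ≠ 0) (m : ℕ) (hm : 1 ≤ (m : ℝ))
    (θ : EuclideanSpace ℝ (Fin n)) (hθ : ‖θ‖ = 1) (d : ℝ) (hd : 0 ≤ d) :
    -2 * sigQF σ M (‖p‖⁻¹ • p) -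
        2 * (∑ i, ∑ j, |σ i| * |σ j| * |M i j|) ^ 2 / ((m : ℝ) * ‖p‖) ≤
      -(1 / 2) * sigQF σ M (θ - -(‖p‖⁻¹ • p)) - (d + (m : ℝ)) * ⟪θ + -(‖p‖⁻¹ • p), p⟫ := by
  set q := ‖p‖⁻¹ • p with hq
  set K := ∑ i, ∑ j, |σ i| * |σ j| * |M i j| with hK
  have hpn : 0 < ‖p‖ := norm_pos_iff.mpr hp
  have hK0 : 0 ≤ K := by positivity
  set t := ‖θ - q‖ with ht
  have ht0 : 0 ≤ t := norm_nonneg _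
  have hin : ⟪θ + -q, p⟫ = ⟪θ, p⟫ - ‖p‖ := by
    rw [inner_add_left, inner_neg_left, hip p hp]; ring
  have hk : ‖p‖ - ⟪θ, p⟫ = (‖p‖ / 2) * t ^ 2 := hkey p θ hp hθ
  have hge0 : 0 ≤ ‖p‖ - ⟪θ, p⟫ := by rw [hk]; positivity
  have hqn : ‖q‖ = 1 := norm_smul_inv_norm hp
  have hn1 : ‖θ + q‖ ≤ 2 := by
    calc ‖θ + q‖ ≤ ‖θ‖ + ‖q‖ := norm_add_le _ _
      _ = 2 := by rw [hθ, hqn]; norm_num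
  have hn2 : ‖(2:ℝ) • q‖ = 2 := by
    rw [norm_smul, hqn]; norm_num
  have hlip := sigQF_lip σ M (θ + q) ((2:ℝ) • q)
  rw [hdiff, hn2, ← ht, ← hK] at hlip
  have hsmul : sigQF σ M ((2:ℝ) • q) = 4 * sigQF σ M q := by
    rw [sigQF_smul]; norm_num
  have h2' : -2 * sigQF σ M q - 2 * K * t ≤ -(1/2) * sigQF σ M (θ + q) := by
    rw [abs_le] at hlip
    nlinarith [hlip.1, hlip.2, mul_nonneg (mul_nonneg hK0 ht0) (sub_nonneg.mpr hn1)]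
  have hcpos : 0 < (m : ℝ) * ‖p‖ := by positivity
  have hquad := key_quad K ((m : ℝ) * ‖p‖) t hK0 hcpos
  have hk' : (m : ℝ) * (‖p‖ - ⟪θ, p⟫) = ((m : ℝ) * ‖p‖ / 2) * t ^ 2 := by
    rw [hk]; ring
  have hdm : 0 ≤ d * (‖p‖ - ⟪θ, p⟫) := mul_nonneg hd hge0
  rw [sub_neg_eq_add, hin]
  nlinarith [h2', hquad, hk', hdm]

lemma bound_b {n : ℕ} (σ : Fin n → ℝ) (M : Matrix (Fin n) (Fin n) ℝ)
    (p : EuclideanSpace ℝ (Fin n)) (hp : p ≠ 0) (m : ℕ) (hm : 1 ≤ (m : ℝ))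
    (θ : EuclideanSpace ℝ (Fin n)) (hθ : ‖θ‖ = 1) (d : ℝ) (hd : 0 ≤ d) :
    -(1 / 2) * sigQF σ M ((‖p‖⁻¹ • p) - θ) - ((m : ℝ) + d) * ⟪(‖p‖⁻¹ • p) + θ, p⟫ ≤
      -2 * sigQF σ M (‖p‖⁻¹ • p) +
        2 * (∑ i, ∑ j, |σ i| * |σ j| * |M i j|) ^ 2 / ((m : ℝ) * ‖p‖) := by
  set q := ‖p‖⁻¹ • p with hq
  set K := ∑ i, ∑ j, |σ i| * |σ j| * |M i j| with hK
  have hpn : 0 < ‖p‖ := norm_pos_iff.mpr hp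
  have hK0 : 0 ≤ K := by positivity
  set s := ‖θ + q‖ with hs
  have hs0 : 0 ≤ s := norm_nonneg _
  have hθn : ‖-θ‖ = 1 := by rw [norm_neg, hθ]
  have hkneg : ‖p‖ - ⟪-θ, p⟫ = (‖p‖ / 2) * ‖(-θ) - q‖ ^ 2 := hkey p (-θ) hp hθn
  have hnegnorm : ‖(-θ) - q‖ = s := by
    rw [show (-θ) - q = -(θ + q) by abel, norm_neg]
  have hin : ⟪q + θ, p⟫ = ‖p‖ - ⟪-θ, p⟫ := by
    rw [inner_add_left, inner_neg_left, hip p hp]; ring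
  have hk : ⟪q + θ, p⟫ = (‖p‖ / 2) * s ^ 2 := by rw [hin, hkneg, hnegnorm]
  have hge0 : 0 ≤ ⟪q + θ, p⟫ := by rw [hk]; positivity
  have hqn : ‖q‖ = 1 := norm_smul_inv_norm hp
  have hn1 : ‖q - θ‖ ≤ 2 := by
    calc ‖q - θ‖ ≤ ‖q‖ + ‖θ‖ := norm_sub_le _ _
      _ = 2 := by rw [hθ, hqn]; norm_num
  have hn2 : ‖(2:ℝ) • q‖ = 2 := by rw [norm_smul, hqn]; norm_num
  have hlip := sigQF_lip σ M (q - θ) ((2:ℝ) • q)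
  rw [hdiff2, norm_neg, hn2, ← hs, ← hK] at hlip
  have hsmul : sigQF σ M ((2:ℝ) • q) = 4 * sigQF σ M q := by
    rw [sigQF_smul]; norm_num
  have h2' : -(1/2) * sigQF σ M (q - θ) ≤ -2 * sigQF σ M q + 2 * K * s := by
    rw [abs_le] at hlip
    nlinarith [hlip.1, hlip.2, mul_nonneg (mul_nonneg hK0 hs0) (sub_nonneg.mpr hn1)]
  have hcpos : 0 < (m : ℝ) * ‖p‖ := by positivity
  have hquad := key_quad K ((m : ℝ) * ‖p‖) s hK0 hcpos
  have hk' : (m : ℝ) * ⟪q + θ, p⟫ = ((m : ℝ) * ‖p‖ / 2) * s ^ 2 := by rw [hk]; ring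
  have hdm : 0 ≤ d * ⟪q + θ, p⟫ := mul_nonneg hd hge0
  nlinarith [h2', hquad, hk', hdm]

lemma minimax_bounds {α β : Type*} {A : Set α} {B : Set β} (f : α → β → ℝ)
    {C L U : ℝ} (hC : ∀ a ∈ A, ∀ b ∈ B, |f a b| ≤ C)
    {a₀ : α} (ha₀ : a₀ ∈ A) {b₀ : β} (hb₀ : b₀ ∈ B)
    (hU : ∀ a ∈ A, f a b₀ ≤ U) (hL : ∀ b ∈ B, L ≤ f a₀ b) :
    (L ≤ sSup ((fun a => sInf ((fun b => f a b) '' B)) '' A) ∧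
      sSup ((fun a => sInf ((fun b => f a b) '' B)) '' A) ≤ U) ∧
    (L ≤ sInf ((fun b => sSup ((fun a => f a b) '' A)) '' B) ∧
      sInf ((fun b => sSup ((fun a => f a b) '' A)) '' B) ≤ U) := by
  have hAne : A.Nonempty := ⟨a₀, ha₀⟩
  have hBne : B.Nonempty := ⟨b₀, hb₀⟩
  have hbdB : ∀ a ∈ A, BddBelow ((fun b => f a b) '' B) := by
    intro a ha
    exact ⟨-C, by rintro _ ⟨b, hb, rfl⟩; linarith [(abs_le.mp (hC a ha b hb)).1]⟩
  have hbdA : ∀ b ∈ B, BddAbove ((fun a => f a b) '' A) := by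
    intro b hb
    exact ⟨C, by rintro _ ⟨a, ha, rfl⟩; linarith [(abs_le.mp (hC a ha b hb)).2]⟩
  have hgU : ∀ a ∈ A, sInf ((fun b => f a b) '' B) ≤ U := fun a ha =>
    (csInf_le (hbdB a ha) ⟨b₀, hb₀, rfl⟩).trans (hU a ha)
  have hhL : ∀ b ∈ B, L ≤ sSup ((fun a => f a b) '' A) := fun b hb =>
    (hL b hb).trans (le_csSup (hbdA b hb) ⟨a₀, ha₀, rfl⟩)
  refine ⟨⟨?_, ?_⟩, ?_, ?_⟩
  · have hbd : BddAbove ((fun a => sInf ((fun b => f a b) '' B)) '' A) :=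
      ⟨U, by rintro _ ⟨a, ha, rfl⟩; exact hgU a ha⟩
    refine le_trans ?_ (le_csSup hbd ⟨a₀, ha₀, rfl⟩)
    exact le_csInf (hBne.image _) (by rintro _ ⟨b, hb, rfl⟩; exact hL b hb)
  · exact csSup_le (hAne.image _) (by rintro _ ⟨a, ha, rfl⟩; exact hgU a ha)
  · exact le_csInf (hBne.image _) (by rintro _ ⟨b, hb, rfl⟩; exact hhL b hb)
  · have hbd : BddBelow ((fun b => sSup ((fun a => f a b) '' A)) '' B) :=
      ⟨L, by rintro _ ⟨b, hb, rfl⟩; exact hhL b hb⟩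
    refine (csInf_le hbd ⟨b₀, hb₀, rfl⟩).trans ?_
    exact csSup_le (hAne.image _) (by rintro _ ⟨a, ha, rfl⟩; exact hU a ha)

lemma phi_abs_bound {n : ℕ} (σ : Fin n → ℝ) (μ : EuclideanSpace ℝ (Fin n))
    (p : EuclideanSpace ℝ (Fin n)) (M : Matrix (Fin n) (Fin n) ℝ) (m : ℕ) :
    ∀ a ∈ Hset n m, ∀ b ∈ Hset n m,
      |Phi σ μ b.1 a.1 b.2 a.2 p M| ≤
        2 * (∑ i, ∑ j, |σ i| * |σ j| * |M i j|) + (1/2) * |trSig2 σ M|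
          + 2 * (m : ℝ) * (2 * ‖p‖) + |⟪μ, p⟫| := by
  rintro ⟨θm, dm⟩ ⟨hθm, hdm0, hdm⟩ ⟨θp, dp⟩ ⟨hθp, hdp0, hdp⟩
  set K := ∑ i, ∑ j, |σ i| * |σ j| * |M i j| with hK
  have hK0 : 0 ≤ K := by positivity
  have hns : ‖θp - θm‖ ≤ 2 := by
    calc ‖θp - θm‖ ≤ ‖θp‖ + ‖θm‖ := norm_sub_le _ _
      _ = 2 := by rw [hθp, hθm]; norm_num
  have h1 : |sigQF σ M (θp - θm)| ≤ 4 * K := by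
    have := sigQF_abs_le σ M (θp - θm)
    rw [← hK] at this
    nlinarith [norm_nonneg (θp - θm),
      mul_nonneg (mul_nonneg hK0 (norm_nonneg (θp - θm))) (sub_nonneg.mpr hns),
      mul_nonneg hK0 (sub_nonneg.mpr hns)]
  have h2 : |(dp + dm) * ⟪θp + θm, p⟫| ≤ 2 * (m : ℝ) * (2 * ‖p‖) := by
    rw [abs_mul]
    have ha : |dp + dm| ≤ 2 * (m : ℝ) := by
      rw [abs_of_nonneg (by linarith)]; linarith
    have hb : |⟪θp + θm, p⟫| ≤ 2 * ‖p‖ := by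
      calc |⟪θp + θm, p⟫| ≤ ‖θp + θm‖ * ‖p‖ := abs_real_inner_le_norm _ _
        _ ≤ 2 * ‖p‖ := by
            have : ‖θp + θm‖ ≤ 2 := by
              calc ‖θp + θm‖ ≤ ‖θp‖ + ‖θm‖ := norm_add_le _ _
                _ = 2 := by rw [hθp, hθm]; norm_num
            exact mul_le_mul_of_nonneg_right this (norm_nonneg p)
    exact mul_le_mul ha hb (abs_nonneg _) (by positivity)
  simp only [Phi]
  rw [abs_le] at h1 h2 ⊢
  constructor <;>
    [ (have := le_abs_self (trSig2 σ M); have := le_abs_self (⟪μ, p⟫ : ℝ);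
       linarith [h1.1, h1.2, h2.1, h2.2, neg_abs_le (trSig2 σ M), neg_abs_le (⟪μ, p⟫ : ℝ)]) ;
      (linarith [h1.1, h1.2, h2.1, h2.2, neg_abs_le (trSig2 σ M), neg_abs_le (⟪μ, p⟫ : ℝ),
        le_abs_self (trSig2 σ M), le_abs_self (⟪μ, p⟫ : ℝ)]) ]

/-- `A_∞`-type quantity: the limit value of the inner inf–sup before adding `rξ`. -/
def Aseq {n : ℕ} (σ : Fin n → ℝ) (μ : EuclideanSpace ℝ (Fin n))
    (p : EuclideanSpace ℝ (Fin n)) (M : Matrix (Fin n) (Fin n) ℝ) : ℝ :=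
  -2 * sigQF σ M (‖p‖⁻¹ • p) - (1/2) * trSig2 σ M - ⟪μ, p⟫

/-- Error term. -/
def eseq {n : ℕ} (σ : Fin n → ℝ) (m : ℕ) (p : EuclideanSpace ℝ (Fin n))
    (M : Matrix (Fin n) (Fin n) ℝ) : ℝ :=
  2 * (∑ i, ∑ j, |σ i| * |σ j| * |M i j|) ^ 2 / ((m : ℝ) * ‖p‖)

lemma hpm_bounds {n : ℕ} (σ : Fin n → ℝ) (μ : EuclideanSpace ℝ (Fin n)) (r : ℝ)
    (m : ℕ) (hm : 1 ≤ m) (ξ : ℝ) (p : EuclideanSpace ℝ (Fin n)) (hp : p ≠ 0)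
    (M : Matrix (Fin n) (Fin n) ℝ) :
    (Aseq σ μ p M - eseq σ m p M + r * ξ ≤ Hplus σ μ r m ξ p M ∧
      Hplus σ μ r m ξ p M ≤ Aseq σ μ p M + eseq σ m p M + r * ξ) ∧
    (Aseq σ μ p M - eseq σ m p M + r * ξ ≤ Hminus σ μ r m ξ p M ∧
      Hminus σ μ r m ξ p M ≤ Aseq σ μ p M + eseq σ m p M + r * ξ) := by
  have hm' : 1 ≤ (m : ℝ) := by exact_mod_cast hm
  have hqn : ‖‖p‖⁻¹ • p‖ = 1 := norm_smul_inv_norm hp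
  have ha₀ : ((-(‖p‖⁻¹ • p), (m : ℝ)) : EuclideanSpace ℝ (Fin n) × ℝ) ∈ Hset n m := by
    refine ⟨by rw [norm_neg]; exact hqn, ?_, le_refl _⟩
    exact Nat.cast_nonneg m
  have hb₀ : (((‖p‖⁻¹ • p), (m : ℝ)) : EuclideanSpace ℝ (Fin n) × ℝ) ∈ Hset n m := by
    refine ⟨hqn, ?_, le_refl _⟩
    exact Nat.cast_nonneg m
  have hC := phi_abs_bound σ μ p M m
  have hU : ∀ a ∈ Hset n m,
      Phi σ μ (‖p‖⁻¹ • p) a.1 (m : ℝ) a.2 p M ≤ Aseq σ μ p M + eseq σ m p M := by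
    rintro ⟨θ, d⟩ ⟨hθ, hd0, _⟩
    have hb := bound_b σ M p hp m hm' θ hθ d hd0
    simp only [Phi, Aseq, eseq]
    linarith
  have hL : ∀ b ∈ Hset n m,
      Aseq σ μ p M - eseq σ m p M ≤ Phi σ μ b.1 (-(‖p‖⁻¹ • p)) b.2 (m : ℝ) p M := by
    rintro ⟨θ, d⟩ ⟨hθ, hd0, _⟩
    have ha := bound_a σ M p hp m hm' θ hθ d hd0
    simp only [Phi, Aseq, eseq]
    linarith
  have H := minimax_bounds (A := Hset n m) (B := Hset n m)
    (fun a b => Phi σ μ b.1 a.1 b.2 a.2 p M) hC ha₀ hb₀ hU hL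
  obtain ⟨⟨h1, h2⟩, h3, h4⟩ := H
  simp only [Hplus, Hminus]
  exact ⟨⟨by linarith, by linarith⟩, by linarith, by linarith⟩


/-- Lemma 5.1: convergence of the Bellman–Isaacs operators,
`H_m^±(ξ_m, p_m, M_m) → −F(ξ, p, M)` as `m → ∞`. -/
theorem bellman_isaacs_operators_converge (n : ℕ) (hn : 1 ≤ n)
    (σ : Fin n → ℝ) (hσ : ∀ i, 0 < σ i) (μ : EuclideanSpace ℝ (Fin n))
    (r : ℝ) (hr : 0 ≤ r)
    (ξs : ℕ → ℝ) (ps : ℕ → EuclideanSpace ℝ (Fin n)) (Ms : ℕ → Matrix (Fin n) (Fin n) ℝ)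
    (ξ : ℝ) (p : EuclideanSpace ℝ (Fin n)) (M : Matrix (Fin n) (Fin n) ℝ)
    (hMs : ∀ m, (Ms m).IsSymm) (hM : M.IsSymm)
    (hps : ∀ m, ps m ≠ 0) (hp : p ≠ 0)
    (hξ : Tendsto ξs atTop (𝓝 ξ)) (hpt : Tendsto ps atTop (𝓝 p))
    (hMt : Tendsto Ms atTop (𝓝 M)) :
    Tendsto (fun m => Hplus σ μ r m (ξs m) (ps m) (Ms m)) atTop (𝓝 (-Fop σ μ r ξ p M)) ∧
    Tendsto (fun m => Hminus σ μ r m (ξs m) (ps m) (Ms m)) atTop (𝓝 (-Fop σ μ r ξ p M)) := by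
  have hpn : (0:ℝ) < ‖p‖ := norm_pos_iff.mpr hp
  have hMij : ∀ i j, Tendsto (fun m => Ms m i j) atTop (𝓝 (M i j)) := fun i j =>
    ((continuous_id.matrix_elem i j).tendsto M).comp hMt
  have hKt : Tendsto (fun m => ∑ i, ∑ j, |σ i| * |σ j| * |Ms m i j|) atTop
      (𝓝 (∑ i, ∑ j, |σ i| * |σ j| * |M i j|)) := by
    refine tendsto_finset_sum _ fun i _ => tendsto_finset_sum _ fun j _ => ?_
    exact tendsto_const_nhds.mul (hMij i j).abs
  have hnorm : Tendsto (fun m => ‖ps m‖) atTop (𝓝 ‖p‖) := hpt.norm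
  have hq : Tendsto (fun m => ‖ps m‖⁻¹ • ps m) atTop (𝓝 (‖p‖⁻¹ • p)) :=
    (hnorm.inv₀ hpn.ne').smul hpt
  have hcomp : ∀ i : Fin n, Tendsto (fun m => (‖ps m‖⁻¹ • ps m) i) atTop
      (𝓝 ((‖p‖⁻¹ • p) i)) := fun i =>
    ((((continuous_apply i).comp (PiLp.continuous_ofLp 2 fun _ : Fin n => ℝ)).tendsto
      _).comp hq)
  have hsig : Tendsto (fun m => sigQF σ (Ms m) (‖ps m‖⁻¹ • ps m)) atTop
      (𝓝 (sigQF σ M (‖p‖⁻¹ • p))) := by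
    simp only [sigQF]
    refine tendsto_finset_sum _ fun i _ => tendsto_finset_sum _ fun j _ => ?_
    exact ((tendsto_const_nhds.mul (hcomp i)).mul (hMij i j)).mul
      (tendsto_const_nhds.mul (hcomp j))
  have htr : Tendsto (fun m => trSig2 σ (Ms m)) atTop (𝓝 (trSig2 σ M)) := by
    simp only [trSig2]
    exact tendsto_finset_sum _ fun i _ => tendsto_const_nhds.mul (hMij i i)
  have hinner : Tendsto (fun m => (⟪μ, ps m⟫ : ℝ)) atTop (𝓝 ⟪μ, p⟫) :=
    tendsto_const_nhds.inner hpt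
  have hA : Tendsto (fun m => Aseq σ μ (ps m) (Ms m)) atTop (𝓝 (Aseq σ μ p M)) := by
    simp only [Aseq]
    exact ((tendsto_const_nhds.mul hsig).sub (tendsto_const_nhds.mul htr)).sub hinner
  have hdenom : Tendsto (fun m : ℕ => (m : ℝ) * ‖ps m‖) atTop atTop :=
    Tendsto.atTop_mul_pos hpn tendsto_natCast_atTop_atTop hnorm
  have he : Tendsto (fun m => eseq σ m (ps m) (Ms m)) atTop (𝓝 0) := by
    simp only [eseq]
    exact (tendsto_const_nhds.mul (hKt.pow 2)).div_atTop hdenom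
  have hlimval : Aseq σ μ p M + r * ξ = -Fop σ μ r ξ p M := by
    simp only [Aseq, Fop]
    rw [sigQF_smul]
    have hne : ‖p‖ ≠ 0 := hpn.ne'
    field_simp
    ring
  have hrξ : Tendsto (fun m => r * ξs m) atTop (𝓝 (r * ξ)) := tendsto_const_nhds.mul hξ
  have hlow : Tendsto (fun m => Aseq σ μ (ps m) (Ms m) - eseq σ m (ps m) (Ms m) + r * ξs m)
      atTop (𝓝 (-Fop σ μ r ξ p M)) := by
    have h := (hA.sub he).add hrξ
    rw [sub_zero, hlimval] at h
    exact h
  have hhigh : Tendsto (fun m => Aseq σ μ (ps m) (Ms m) + eseq σ m (ps m) (Ms m) + r * ξs m)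
      atTop (𝓝 (-Fop σ μ r ξ p M)) := by
    have h := (hA.add he).add hrξ
    rw [add_zero, hlimval] at h
    exact h
  have hbd := fun (m : ℕ) (hm : 1 ≤ m) =>
    hpm_bounds σ μ r m hm (ξs m) (ps m) (hps m) (Ms m)
  constructor
  · refine tendsto_of_tendsto_of_tendsto_of_le_of_le' hlow hhigh ?_ ?_
    · exact eventually_atTop.mpr ⟨1, fun m hm => ((hbd m hm).1).1⟩
    · exact eventually_atTop.mpr ⟨1, fun m hm => ((hbd m hm).1).2⟩
  · refine tendsto_of_tendsto_of_tendsto_of_le_of_le' hlow hhigh ?_ ?_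
    · exact eventually_atTop.mpr ⟨1, fun m hm => ((hbd m hm).2).1⟩
    · exact eventually_atTop.mpr ⟨1, fun m hm => ((hbd m hm).2).2⟩

end TugOfWar
end
end

section
/- Convergence of minimizing directions (claims (5.1) and (5.4) in the proof of Lemma 5.1): Let p_m → p in ℝ^n with p ≠ 0 and let symmetric matrices M_m → M. For each m, the continuous function (θ⁺,d⁺) ↦ sup_{(θ⁻,d⁻)∈ℋ_m} Φ̃(θ⁺,θ⁻,d⁺,d⁻,p_m,M_m) attains its infimum over the compact set ℋ_m at some point (θ_m⁺, d_m⁺), and for every such choice of minimizers one has θ_m⁺ · p_m → |p| and θ_m⁺ → p/|p| as m → ∞. -/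
open scoped RealInnerProductSpace
open Filter Topology

noncomputable section

namespace TugOfWar

/-! ### Auxiliary lemmas -/

section Aux

variable {n : ℕ}

/-- Bound constant for the quadratic form. -/
def Cq (σ : Fin n → ℝ) (M : Matrix (Fin n) (Fin n) ℝ) : ℝ :=
  ∑ i, ∑ j, |σ i * M i j * σ j|

lemma Cq_nonneg (σ : Fin n → ℝ) (M : Matrix (Fin n) (Fin n) ℝ) : 0 ≤ Cq σ M := by
  unfold Cq; positivity

lemma abs_coord_le (v : EuclideanSpace ℝ (Fin n)) (i : Fin n) : |v i| ≤ ‖v‖ := by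
  have h := abs_real_inner_le_norm (EuclideanSpace.single i (1:ℝ)) v
  simpa [EuclideanSpace.inner_single_left, EuclideanSpace.norm_single] using h

lemma abs_sigQF_le (σ : Fin n → ℝ) (M : Matrix (Fin n) (Fin n) ℝ)
    (v : EuclideanSpace ℝ (Fin n)) : |sigQF σ M v| ≤ Cq σ M * ‖v‖ ^ 2 := by
  unfold sigQF Cq
  calc |∑ i, ∑ j, (σ i * v i) * M i j * (σ j * v j)|
      ≤ ∑ i, ∑ j, |(σ i * v i) * M i j * (σ j * v j)| :=
        (Finset.abs_sum_le_sum_abs _ _).trans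
          (Finset.sum_le_sum fun i _ => Finset.abs_sum_le_sum_abs _ _)
    _ ≤ ∑ i, ∑ j, |σ i * M i j * σ j| * ‖v‖ ^ 2 := by
        refine Finset.sum_le_sum fun i _ => Finset.sum_le_sum fun j _ => ?_
        have heq : |(σ i * v i) * M i j * (σ j * v j)|
            = |σ i * M i j * σ j| * (|v i| * |v j|) := by
          simp only [abs_mul]; ring
        rw [heq]
        refine mul_le_mul_of_nonneg_left ?_ (abs_nonneg _)
        calc |v i| * |v j| ≤ ‖v‖ * ‖v‖ :=
              mul_le_mul (abs_coord_le v i) (abs_coord_le v j) (abs_nonneg _) (norm_nonneg _)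
          _ = ‖v‖ ^ 2 := (sq ‖v‖).symm
    _ = (∑ i, ∑ j, |σ i * M i j * σ j|) * ‖v‖ ^ 2 := by
        simp [Finset.sum_mul]

lemma Hset_eq (m : ℕ) :
    Hset n m = Metric.sphere (0 : EuclideanSpace ℝ (Fin n)) 1 ×ˢ Set.Icc (0:ℝ) m := by
  ext a
  simp [Hset, Set.mem_prod, mem_sphere_zero_iff_norm]

lemma isCompact_Hset (m : ℕ) : IsCompact (Hset n m) := by
  rw [Hset_eq]
  exact (isCompact_sphere _ _).prod isCompact_Icc

lemma Hset_nonempty (hn : 1 ≤ n) (m : ℕ) : (Hset n m).Nonempty := by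
  refine ⟨(EuclideanSpace.single (⟨0, hn⟩ : Fin n) (1:ℝ), 0), ?_, ?_⟩
  · simp [EuclideanSpace.norm_single]
  · exact ⟨le_refl _, Nat.cast_nonneg m⟩

lemma phiT_le {m : ℕ} {σ : Fin n → ℝ} {p : EuclideanSpace ℝ (Fin n)}
    {M : Matrix (Fin n) (Fin n) ℝ}
    (a : EuclideanSpace ℝ (Fin n) × ℝ) {b : EuclideanSpace ℝ (Fin n) × ℝ}
    (hb : b ∈ Hset n m) :
    PhiT σ a.1 b.1 a.2 b.2 p M
      ≤ Cq σ M * (‖a.1‖ + 1) ^ 2 + (|a.2| + m) * ((‖a.1‖ + 1) * ‖p‖) := by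
  obtain ⟨hb1, hb2⟩ := hb
  have hQ : |sigQF σ M (a.1 - b.1)| ≤ Cq σ M * (‖a.1‖ + 1) ^ 2 := by
    refine (abs_sigQF_le _ _ _).trans ?_
    have h1 : ‖a.1 - b.1‖ ≤ ‖a.1‖ + 1 := by
      calc ‖a.1 - b.1‖ ≤ ‖a.1‖ + ‖b.1‖ := norm_sub_le _ _
        _ = ‖a.1‖ + 1 := by rw [hb1]
    exact mul_le_mul_of_nonneg_left
      (pow_le_pow_left₀ (norm_nonneg _) h1 2) (Cq_nonneg σ M)
  have hI : |⟪a.1 + b.1, p⟫| ≤ (‖a.1‖ + 1) * ‖p‖ := by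
    refine (abs_real_inner_le_norm _ _).trans ?_
    have h1 : ‖a.1 + b.1‖ ≤ ‖a.1‖ + 1 := by
      calc ‖a.1 + b.1‖ ≤ ‖a.1‖ + ‖b.1‖ := norm_add_le _ _
        _ = ‖a.1‖ + 1 := by rw [hb1]
    exact mul_le_mul_of_nonneg_right h1 (norm_nonneg _)
  have hd : |a.2 + b.2| ≤ |a.2| + m :=
    (abs_add_le _ _).trans (by rw [abs_of_nonneg hb2.1]; linarith [hb2.2])
  have hprod : |a.2 + b.2| * |⟪a.1 + b.1, p⟫| ≤ (|a.2| + m) * ((‖a.1‖ + 1) * ‖p‖) :=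
    mul_le_mul hd hI (abs_nonneg _) (by positivity)
  have h2 : -((a.2 + b.2) * ⟪a.1 + b.1, p⟫) ≤ |a.2 + b.2| * |⟪a.1 + b.1, p⟫| := by
    rw [← abs_mul]
    exact neg_le_abs _
  have h3 : -(1/2 : ℝ) * sigQF σ M (a.1 - b.1) ≤ |sigQF σ M (a.1 - b.1)| := by
    have := neg_le_abs (sigQF σ M (a.1 - b.1))
    have h0 := abs_nonneg (sigQF σ M (a.1 - b.1))
    linarith
  unfold PhiT
  linarith

lemma bddAbove_phiT (σ : Fin n → ℝ) (m : ℕ) (a : EuclideanSpace ℝ (Fin n) × ℝ)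
    (p : EuclideanSpace ℝ (Fin n)) (M : Matrix (Fin n) (Fin n) ℝ) :
    BddAbove ((fun b => PhiT σ a.1 b.1 a.2 b.2 p M) '' Hset n m) := by
  refine ⟨Cq σ M * (‖a.1‖ + 1) ^ 2 + (|a.2| + m) * ((‖a.1‖ + 1) * ‖p‖), ?_⟩
  rintro y ⟨b, hb, rfl⟩
  exact phiT_le a hb

lemma le_supPhiT {σ : Fin n → ℝ} {m : ℕ} {p : EuclideanSpace ℝ (Fin n)}
    {M : Matrix (Fin n) (Fin n) ℝ} (a : EuclideanSpace ℝ (Fin n) × ℝ)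
    {b : EuclideanSpace ℝ (Fin n) × ℝ} (hb : b ∈ Hset n m) :
    PhiT σ a.1 b.1 a.2 b.2 p M ≤ supPhiT σ m a p M :=
  le_csSup (bddAbove_phiT σ m a p M) ⟨b, hb, rfl⟩

lemma supPhiT_le (hn : 1 ≤ n) {σ : Fin n → ℝ} {m : ℕ} {p : EuclideanSpace ℝ (Fin n)}
    {M : Matrix (Fin n) (Fin n) ℝ} (a : EuclideanSpace ℝ (Fin n) × ℝ) {c : ℝ}
    (h : ∀ b ∈ Hset n m, PhiT σ a.1 b.1 a.2 b.2 p M ≤ c) : supPhiT σ m a p M ≤ c :=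
  csSup_le ((Hset_nonempty hn m).image _) (by rintro y ⟨b, hb, rfl⟩; exact h b hb)

lemma continuous_phiT_a (σ : Fin n → ℝ) (b : EuclideanSpace ℝ (Fin n) × ℝ)
    (p : EuclideanSpace ℝ (Fin n)) (M : Matrix (Fin n) (Fin n) ℝ) :
    Continuous (fun a : EuclideanSpace ℝ (Fin n) × ℝ => PhiT σ a.1 b.1 a.2 b.2 p M) := by
  have hcoord : ∀ i : Fin n, Continuous (fun v : EuclideanSpace ℝ (Fin n) => v i) :=
    fun i => (EuclideanSpace.proj (𝕜 := ℝ) i).continuous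
  have hsub : Continuous (fun a : EuclideanSpace ℝ (Fin n) × ℝ => a.1 - b.1) :=
    continuous_fst.sub continuous_const
  have hQ : Continuous (fun a : EuclideanSpace ℝ (Fin n) × ℝ => sigQF σ M (a.1 - b.1)) := by
    unfold sigQF
    refine continuous_finset_sum _ fun i _ => continuous_finset_sum _ fun j _ => ?_
    exact ((continuous_const.mul ((hcoord i).comp hsub)).mul continuous_const).mul
      (continuous_const.mul ((hcoord j).comp hsub))
  have hI : Continuous (fun a : EuclideanSpace ℝ (Fin n) × ℝ => (⟪a.1 + b.1, p⟫ : ℝ)) :=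
    (continuous_fst.add continuous_const).inner continuous_const
  unfold PhiT
  exact (continuous_const.mul hQ).sub ((continuous_snd.add continuous_const).mul hI)

lemma lsc_supPhiT (hn : 1 ≤ n) (σ : Fin n → ℝ) (m : ℕ) (p : EuclideanSpace ℝ (Fin n))
    (M : Matrix (Fin n) (Fin n) ℝ) :
    LowerSemicontinuous (fun a : EuclideanSpace ℝ (Fin n) × ℝ => supPhiT σ m a p M) := by
  intro a₀ y hy
  obtain ⟨z, hz, hyz⟩ := exists_lt_of_lt_csSup ((Hset_nonempty hn m).image _) hy
  obtain ⟨b, hb, rfl⟩ := hz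
  have hcont := (continuous_phiT_a σ b p M).continuousAt (x := a₀)
  filter_upwards [hcont.eventually (eventually_gt_nhds hyz)] with a hya
  exact lt_of_lt_of_le hya (le_supPhiT a hb)

lemma exists_min_of_lsc {α : Type*} [TopologicalSpace α] [T2Space α] {K : Set α}
    {f : α → ℝ} (hK : IsCompact K) (hne : K.Nonempty) (hf : LowerSemicontinuous f) :
    ∃ a ∈ K, ∀ b ∈ K, f a ≤ f b := by
  haveI : Nonempty K := hne.to_subtype
  set t : K → Set α := fun b => K ∩ f ⁻¹' Set.Iic (f b) with ht
  have h := IsCompact.nonempty_iInter_of_directed_nonempty_isCompact_isClosed t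
    ?_ ?_ ?_ ?_
  · obtain ⟨a, ha⟩ := h
    simp only [Set.mem_iInter] at ha
    obtain ⟨b₀⟩ := ‹Nonempty K›
    exact ⟨a, (ha b₀).1, fun b hb => (ha ⟨b, hb⟩).2⟩
  · intro b c
    rcases le_total (f b) (f c) with h' | h'
    · exact ⟨b, fun x hx => hx, fun x hx => ⟨hx.1, le_trans hx.2 h'⟩⟩
    · exact ⟨c, fun x hx => ⟨hx.1, le_trans hx.2 h'⟩, fun x hx => hx⟩
  · exact fun b => ⟨b, b.2, Set.mem_preimage.mpr (Set.mem_Iic.mpr le_rfl)⟩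
  · exact fun b => hK.inter_right (hf.isClosed_preimage (f b))
  · exact fun b => hK.isClosed.inter (hf.isClosed_preimage (f b))

end Aux

/-- claims (5.1) and (5.4) in the proof of Lemma 5.1: for each `m` the
inner-sup function attains its infimum over `ℋ_m` at some `(θ_m⁺, d_m⁺)`, and every such
sequence of minimizers satisfies `θ_m⁺ · p_m → |p|` and `θ_m⁺ → p/|p|`. -/
theorem minimizing_directions_converge (n : ℕ) (hn : 1 ≤ n)
    (σ : Fin n → ℝ) (hσ : ∀ i, 0 < σ i)
    (ps : ℕ → EuclideanSpace ℝ (Fin n)) (Ms : ℕ → Matrix (Fin n) (Fin n) ℝ)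
    (p : EuclideanSpace ℝ (Fin n)) (M : Matrix (Fin n) (Fin n) ℝ)
    (hMs : ∀ m, (Ms m).IsSymm) (hM : M.IsSymm) (hp : p ≠ 0)
    (hpt : Tendsto ps atTop (𝓝 p)) (hMt : Tendsto Ms atTop (𝓝 M)) :
    (∀ m : ℕ, ∃ a ∈ Hset n m, ∀ b ∈ Hset n m,
      supPhiT σ m a (ps m) (Ms m) ≤ supPhiT σ m b (ps m) (Ms m)) ∧
    ∀ a : ℕ → EuclideanSpace ℝ (Fin n) × ℝ,
      (∀ m : ℕ, a m ∈ Hset n m ∧ ∀ b ∈ Hset n m,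
        supPhiT σ m (a m) (ps m) (Ms m) ≤ supPhiT σ m b (ps m) (Ms m)) →
      Tendsto (fun m => ⟪(a m).1, ps m⟫) atTop (𝓝 ‖p‖) ∧
      Tendsto (fun m => (a m).1) atTop (𝓝 (‖p‖⁻¹ • p)) := by
  refine ⟨fun m => exists_min_of_lsc (isCompact_Hset m) (Hset_nonempty hn m)
      (lsc_supPhiT hn σ m (ps m) (Ms m)), fun a ha => ?_⟩
  -- bound the constants
  have hCcont : Continuous (fun M' : Matrix (Fin n) (Fin n) ℝ => Cq σ M') := by
    unfold Cq
    refine continuous_finset_sum _ fun i _ => continuous_finset_sum _ fun j _ => ?_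
    have hentry : Continuous (fun M' : Matrix (Fin n) (Fin n) ℝ => M' i j) :=
      (continuous_apply j).comp (continuous_apply (A := fun _ : Fin n => Fin n → ℝ) i)
    exact ((continuous_const.mul hentry).mul continuous_const).abs
  have hCt : Tendsto (fun m => Cq σ (Ms m)) atTop (𝓝 (Cq σ M)) := (hCcont.tendsto M).comp hMt
  obtain ⟨C₀, hC₀⟩ : ∃ C₀ : ℝ, ∀ m, Cq σ (Ms m) ≤ C₀ := by
    obtain ⟨N, hN⟩ := (hCt.eventually (eventually_le_nhds (lt_add_one (Cq σ M)))).exists_forall_of_atTop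
    refine ⟨max (Cq σ M + 1) (((Finset.range (N+1)).image (fun m => Cq σ (Ms m))).max'
      (by simp)), fun m => ?_⟩
    rcases le_or_gt N m with h | h
    · exact le_max_of_le_left (hN m h)
    · refine le_max_of_le_right (Finset.le_max' _ _ ?_)
      exact Finset.mem_image.mpr ⟨m, Finset.mem_range.mpr (by omega), rfl⟩
  have hpnorm_ne : ‖p‖ ≠ 0 := norm_ne_zero_iff.mpr hp
  have hnorm_t : Tendsto (fun m => ‖ps m‖) atTop (𝓝 ‖p‖) := (continuous_norm.tendsto p).comp hpt
  have hps_ne : ∀ᶠ m in atTop, ps m ≠ 0 := hpt.eventually_ne hp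
  -- the key estimate
  have key : ∀ᶠ m in atTop, 0 ≤ ‖ps m‖ - ⟪(a m).1, ps m⟫ ∧
      ‖ps m‖ - ⟪(a m).1, ps m⟫ ≤ 4 * C₀ / m := by
    filter_upwards [hps_ne, eventually_ge_atTop 1] with m hpm hm1
    obtain ⟨ham, hmin⟩ := ha m
    set q : EuclideanSpace ℝ (Fin n) := ‖ps m‖⁻¹ • ps m with hqdef
    have hqnorm : ‖q‖ = 1 := norm_smul_inv_norm hpm
    have hqpin : (⟪q, ps m⟫ : ℝ) = ‖ps m‖ := by
      rw [hqdef, real_inner_smul_left, real_inner_self_eq_norm_sq, sq,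
        inv_mul_cancel_left₀ (norm_ne_zero_iff.mpr hpm)]
    have hs : ⟪(a m).1, ps m⟫ - ‖ps m‖ ≤ 0 := by
      have h2 := real_inner_le_norm (a m).1 (ps m)
      rw [ham.1, one_mul] at h2
      linarith
    refine ⟨by linarith, ?_⟩
    -- upper bound for the minimal value
    have hup : supPhiT σ m (a m) (ps m) (Ms m) ≤ 2 * C₀ := by
      have hqmem : ((q, 0) : EuclideanSpace ℝ (Fin n) × ℝ) ∈ Hset n m :=
        ⟨hqnorm, le_refl _, Nat.cast_nonneg m⟩
      refine (hmin (q, 0) hqmem).trans (supPhiT_le hn _ fun b hb => ?_)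
      obtain ⟨hb1, hb2⟩ := hb
      have hQ : |sigQF σ (Ms m) (q - b.1)| ≤ Cq σ (Ms m) * 4 := by
        have h1 : ‖q - b.1‖ ≤ 2 := by
          calc ‖q - b.1‖ ≤ ‖q‖ + ‖b.1‖ := norm_sub_le _ _
            _ = 2 := by rw [hqnorm, hb1]; norm_num
        have h3 : ‖q - b.1‖ ^ 2 ≤ 4 := by nlinarith [norm_nonneg (q - b.1)]
        exact (abs_sigQF_le σ (Ms m) (q - b.1)).trans
          (mul_le_mul_of_nonneg_left h3 (Cq_nonneg σ (Ms m)))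
      have hIn : (0:ℝ) ≤ ⟪q + b.1, ps m⟫ := by
        rw [inner_add_left, hqpin]
        have h2 := abs_real_inner_le_norm b.1 (ps m)
        rw [hb1, one_mul] at h2
        linarith [neg_abs_le (⟪b.1, ps m⟫ : ℝ)]
      have h3 : (0:ℝ) ≤ b.2 * ⟪q + b.1, ps m⟫ := mul_nonneg hb2.1 hIn
      unfold PhiT
      have h4 := neg_le_abs (sigQF σ (Ms m) (q - b.1))
      have h5 := hC₀ m
      simp only []
      linarith
    -- lower bound via the competitor (-q, m)
    have hbm : ((-q, (m:ℝ)) : EuclideanSpace ℝ (Fin n) × ℝ) ∈ Hset n m :=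
      ⟨by rw [norm_neg, hqnorm], Nat.cast_nonneg m, le_refl _⟩
    have hle := (le_supPhiT (σ := σ) (m := m) (p := ps m) (M := Ms m) (a m) hbm).trans hup
    have hIn2 : (⟪(a m).1 + -q, ps m⟫ : ℝ) = ⟪(a m).1, ps m⟫ - ‖ps m‖ := by
      rw [inner_add_left, inner_neg_left, hqpin]; ring
    have hQ2 : |sigQF σ (Ms m) ((a m).1 - -q)| ≤ Cq σ (Ms m) * 4 := by
      have h1 : ‖(a m).1 - -q‖ ≤ 2 := by
        rw [sub_neg_eq_add]
        calc ‖(a m).1 + q‖ ≤ ‖(a m).1‖ + ‖q‖ := norm_add_le _ _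
          _ = 2 := by rw [ham.1, hqnorm]; norm_num
      have h3 : ‖(a m).1 - -q‖ ^ 2 ≤ 4 := by nlinarith [norm_nonneg ((a m).1 - -q)]
      exact (abs_sigQF_le σ (Ms m) ((a m).1 - -q)).trans
        (mul_le_mul_of_nonneg_left h3 (Cq_nonneg σ (Ms m)))
    have hPhi : -(1/2 : ℝ) * sigQF σ (Ms m) ((a m).1 - -q)
        - ((a m).2 + (m:ℝ)) * (⟪(a m).1, ps m⟫ - ‖ps m‖) ≤ 2 * C₀ := by
      unfold PhiT at hle
      rwa [hIn2] at hle
    have hDs : ((a m).2 + (m:ℝ)) * (‖ps m‖ - ⟪(a m).1, ps m⟫) ≤ 4 * C₀ := by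
      have h4 := le_abs_self (sigQF σ (Ms m) ((a m).1 - -q))
      have h5 := hC₀ m
      nlinarith
    have hfin : (m:ℝ) * (‖ps m‖ - ⟪(a m).1, ps m⟫)
        ≤ ((a m).2 + (m:ℝ)) * (‖ps m‖ - ⟪(a m).1, ps m⟫) :=
      mul_le_mul_of_nonneg_right (by linarith [ham.2.1]) (by linarith)
    rw [le_div_iff₀ (by exact_mod_cast lt_of_lt_of_le one_pos (by exact_mod_cast hm1))]
    calc (‖ps m‖ - ⟪(a m).1, ps m⟫) * m = m * (‖ps m‖ - ⟪(a m).1, ps m⟫) := mul_comm _ _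
      _ ≤ 4 * C₀ := le_trans hfin hDs
  -- first limit
  have hlow_t : Tendsto (fun m : ℕ => ‖ps m‖ - 4 * C₀ / m) atTop (𝓝 ‖p‖) := by
    have hz : Tendsto (fun m : ℕ => 4 * C₀ / (m:ℝ)) atTop (𝓝 0) :=
      Tendsto.div_atTop tendsto_const_nhds tendsto_natCast_atTop_atTop
    simpa using hnorm_t.sub hz
  have h1 : Tendsto (fun m => (⟪(a m).1, ps m⟫ : ℝ)) atTop (𝓝 ‖p‖) := by
    refine tendsto_of_tendsto_of_tendsto_of_le_of_le' hlow_t hnorm_t ?_ ?_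
    · filter_upwards [key] with m hm
      linarith [hm.2]
    · refine Eventually.of_forall fun m => ?_
      have h2 := real_inner_le_norm (a m).1 (ps m)
      rw [(ha m).1.1, one_mul] at h2
      exact h2
  refine ⟨h1, ?_⟩
  -- second limit
  have hq_t : Tendsto (fun m => ‖ps m‖⁻¹ • ps m) atTop (𝓝 (‖p‖⁻¹ • p)) :=
    (hnorm_t.inv₀ hpnorm_ne).smul hpt
  have hdiff_sq : Tendsto (fun m => ‖(a m).1 - ‖ps m‖⁻¹ • ps m‖ ^ 2) atTop (𝓝 0) := by
    have heq : ∀ᶠ m in atTop, 2 - 2 * (‖ps m‖⁻¹ * ⟪(a m).1, ps m⟫)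
        = ‖(a m).1 - ‖ps m‖⁻¹ • ps m‖ ^ 2 := by
      filter_upwards [hps_ne] with m hm
      rw [norm_sub_sq_real, (ha m).1.1, norm_smul, norm_inv, norm_norm,
        inv_mul_cancel₀ (norm_ne_zero_iff.mpr hm), real_inner_smul_right]
      ring
    have hlim : Tendsto (fun m => 2 - 2 * (‖ps m‖⁻¹ * (⟪(a m).1, ps m⟫ : ℝ))) atTop
        (𝓝 (2 - 2 * (‖p‖⁻¹ * ‖p‖))) :=
      tendsto_const_nhds.sub (tendsto_const_nhds.mul ((hnorm_t.inv₀ hpnorm_ne).mul h1))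
    rw [inv_mul_cancel₀ hpnorm_ne] at hlim
    norm_num at hlim
    exact hlim.congr' heq
  have hdiff : Tendsto (fun m => (a m).1 - ‖ps m‖⁻¹ • ps m) atTop (𝓝 0) := by
    rw [tendsto_zero_iff_norm_tendsto_zero]
    have hsqrt : Tendsto (fun m => Real.sqrt (‖(a m).1 - ‖ps m‖⁻¹ • ps m‖ ^ 2)) atTop
        (𝓝 (Real.sqrt 0)) := (Real.continuous_sqrt.tendsto 0).comp hdiff_sq
    rw [Real.sqrt_zero] at hsqrt
    exact hsqrt.congr fun m => Real.sqrt_sq (norm_nonneg _)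
  have := hdiff.add hq_t
  rw [zero_add] at this
  exact this.congr fun m => by rw [sub_add_cancel]


end TugOfWar
end
end
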